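/- Let n ≥ 1 be an odd natural number, Ω > 0, ζ₀ > 0, and define W(x₁, x₂, ζ) = ( Ω·(x₁ + Ω^{−1/n})ⁿ − 1 )·x₂ + (n+1)·x₂²/ζ. Then for every solution x = (x₁, x₂) : [ζ₀, ∞) → ℝ² of the shifted odd system, the function ζ ↦ W(x₁(ζ), x₂(ζ), ζ) is differentiable with derivative equal to (1/(n+1))·( Ω·(x₁(ζ) + Ω^{−1/n})ⁿ − 1 )² + x₂(ζ)²·( n·Ω·(x₁(ζ) + Ω^{−1/n})^{n−1} − 5(n+1)/ζ² ). -/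

import Mathlib

/-- A solution on [ζ₀, ∞) of the shifted odd system arising from the
generalized Lane–Emden equation with γ = 1 + 1/n: x₁′ = x₂,
x₂′ = (1/(n+1))·(Ω·(x₁ + Ω^{−1/n})ⁿ − 1) − 2x₂/ζ. -/
def IsSolShiftedOdd (n : ℕ) (Ω ζ₀ : ℝ) (x₁ x₂ : ℝ → ℝ) : Prop :=
  ∀ ζ ∈ Set.Ici ζ₀,
    HasDerivWithinAt x₁ (x₂ ζ) (Set.Ici ζ₀) ζ ∧
    HasDerivWithinAt x₂
      ((1 / ((n : ℝ) + 1)) * (Ω * (x₁ ζ + Ω ^ (-1 / (n : ℝ))) ^ n - 1)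
        - 2 * x₂ ζ / ζ)
      (Set.Ici ζ₀) ζ

/-- The instability Chetaev-type function
W(x₁,x₂,ζ) = (Ω(x₁ + Ω^{−1/n})ⁿ − 1)x₂ + (n+1)x₂²/ζ. -/
noncomputable def chetaevW (n : ℕ) (Ω : ℝ) (x₁ x₂ ζ : ℝ) : ℝ :=
  (Ω * (x₁ + Ω ^ (-1 / (n : ℝ))) ^ n - 1) * x₂ + ((n : ℝ) + 1) * x₂ ^ 2 / ζ

/-- Along any solution of the shifted odd system, the function
ζ ↦ W(x₁(ζ), x₂(ζ), ζ) is differentiable with derivative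
(1/(n+1))(Ω(x₁ + Ω^{−1/n})ⁿ − 1)² + x₂²(nΩ(x₁ + Ω^{−1/n})^{n−1} − 5(n+1)/ζ²). -/
theorem laneEmden_chetaev_derivative
    (n : ℕ) (hn : 1 ≤ n) (hno : Odd n) (Ω ζ₀ : ℝ) (hΩ : 0 < Ω) (hζ₀ : 0 < ζ₀)
    (x₁ x₂ : ℝ → ℝ) (hx : IsSolShiftedOdd n Ω ζ₀ x₁ x₂) :
    ∀ ζ ∈ Set.Ici ζ₀,
      HasDerivWithinAt (fun s : ℝ => chetaevW n Ω (x₁ s) (x₂ s) s)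
        ((1 / ((n : ℝ) + 1)) * (Ω * (x₁ ζ + Ω ^ (-1 / (n : ℝ))) ^ n - 1) ^ 2
          + x₂ ζ ^ 2 * ((n : ℝ) * Ω * (x₁ ζ + Ω ^ (-1 / (n : ℝ))) ^ (n - 1)
              - 5 * ((n : ℝ) + 1) / ζ ^ 2))
        (Set.Ici ζ₀) ζ := by
  intro ζ hζ
  have hζpos : 0 < ζ := lt_of_lt_of_le hζ₀ hζ
  have hζne : ζ ≠ 0 := hζpos.ne'
  obtain ⟨h1, h2⟩ := hx ζ hζ
  set a : ℝ := Ω ^ (-1 / (n : ℝ)) with ha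
  have hu : HasDerivWithinAt (fun s => Ω * (x₁ s + a) ^ n - 1)
      (Ω * ((n : ℝ) * (x₁ ζ + a) ^ (n - 1) * x₂ ζ)) (Set.Ici ζ₀) ζ :=
    (((h1.add_const a).pow n).const_mul Ω).sub_const 1
  have hprod := hu.mul h2
  have hq : HasDerivWithinAt (fun s => ((n : ℝ) + 1) * x₂ s ^ 2 / s)
      ((((n:ℝ)+1) * (2 * x₂ ζ ^ 1 * ((1 / ((n : ℝ) + 1)) * (Ω * (x₁ ζ + a) ^ n - 1)
        - 2 * x₂ ζ / ζ)) * ζ - ((n:ℝ)+1) * x₂ ζ ^ 2 * 1) / ζ ^ 2) (Set.Ici ζ₀) ζ :=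
    (((h2.pow 2).const_mul ((n:ℝ)+1)).div (hasDerivWithinAt_id ζ _) hζne)
  have hW := hprod.add hq
  simp only [chetaevW]
  convert hW using 1
  · rfl
  · rfl
  · rfl
  have hn1 : ((n:ℝ) + 1) ≠ 0 := by positivity
  field_simp
  ring
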